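/- For each fixed x ∈ ℝ, as p → 0⁺ one has φ(x,p) → υ·e^x, ∂φ/∂x(x,p) → υ·e^x, and ∂²φ/∂x²(x,p) → υ·e^x. -/

import Mathlib

open Filter Real

/-- The function `φ(x,p) = ln Σ_{n≥0} (υⁿ/n!)·exp(xn − (ap/2)n²)`. -/
noncomputable def phi (υ a x p : ℝ) : ℝ :=
  Real.log (∑' n : ℕ, (υ ^ n / (Nat.factorial n : ℝ)) *
    Real.exp (x * n - (a * p / 2) * (n : ℝ) ^ 2))

noncomputable def trm (υ c y : ℝ) (n : ℕ) : ℝ :=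
  υ ^ n / (Nat.factorial n : ℝ) * Real.exp (y * n - c * (n : ℝ) ^ 2)

lemma trm_pos {υ : ℝ} (hυ : 0 < υ) (c y : ℝ) (n : ℕ) : 0 < trm υ c y n := by
  unfold trm
  positivity

lemma trm_bound {υ : ℝ} (hυ : 0 < υ) {c : ℝ} (hc : 0 ≤ c) {y B : ℝ} (hy : y ≤ B)
    {k : ℕ} (hk : k ≤ 2) (n : ℕ) :
    (n : ℝ) ^ k * trm υ c y n ≤ (4 * (υ * Real.exp B)) ^ n / (Nat.factorial n : ℝ) := by
  have hfac : (0:ℝ) < (Nat.factorial n : ℝ) := by positivity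
  have h4 : (n : ℝ) ^ k ≤ (4:ℝ) ^ n := by
    have h2 : (n : ℝ) ≤ (2:ℝ) ^ n := by
      exact_mod_cast (Nat.lt_two_pow_self (n := n)).le
    have h2n : (0:ℝ) ≤ (n:ℝ) := Nat.cast_nonneg n
    interval_cases k
    · simpa using one_le_pow₀ (by norm_num : (1:ℝ) ≤ 4) (n:=n)
    · calc (n:ℝ)^1 = (n:ℝ) := pow_one _
        _ ≤ (2:ℝ)^n := h2
        _ ≤ (4:ℝ)^n := pow_le_pow_left₀ (by norm_num) (by norm_num) n
    · calc (n:ℝ)^2 ≤ ((2:ℝ)^n)^2 := pow_le_pow_left₀ h2n h2 2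
        _ = (4:ℝ)^n := by rw [← pow_mul, mul_comm, pow_mul]; norm_num
  have hexp : Real.exp (y * n - c * (n:ℝ)^2) ≤ (Real.exp B) ^ n := by
    rw [← Real.exp_nat_mul]
    apply Real.exp_le_exp.2
    have h1 : y * n ≤ B * n := by
      apply mul_le_mul_of_nonneg_right hy (Nat.cast_nonneg n)
    nlinarith [sq_nonneg (n:ℝ), mul_nonneg hc (sq_nonneg (n:ℝ))]
  unfold trm
  have : (n:ℝ)^k * (υ ^ n / (Nat.factorial n : ℝ) * Real.exp (y * n - c * (n:ℝ)^2))
      ≤ (4:ℝ)^n * (υ ^ n / (Nat.factorial n : ℝ) * (Real.exp B)^n) := by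
    have hbase : (0:ℝ) ≤ υ ^ n / (Nat.factorial n : ℝ) := by positivity
    have := mul_le_mul h4 (mul_le_mul_of_nonneg_left hexp hbase)
      (by positivity) (by positivity)
    exact this
  calc (n:ℝ)^k * trm υ c y n ≤ (4:ℝ)^n * (υ ^ n / (Nat.factorial n : ℝ) * (Real.exp B)^n) := this
    _ = (4:ℝ)^n * (υ^n * (Real.exp B)^n) / (Nat.factorial n : ℝ) := by ring
    _ = (4 * (υ * Real.exp B)) ^ n / (Nat.factorial n : ℝ) := by rw [mul_pow, mul_pow]

lemma summable_trm {υ : ℝ} (hυ : 0 < υ) {c : ℝ} (hc : 0 ≤ c) (y : ℝ) {k : ℕ} (hk : k ≤ 2) :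
    Summable (fun n : ℕ => (n : ℝ) ^ k * trm υ c y n) := by
  apply Summable.of_nonneg_of_le
    (fun n => mul_nonneg (by positivity) (trm_pos hυ c y n).le)
    (fun n => trm_bound hυ hc le_rfl hk n)
    (Real.summable_pow_div_factorial (4 * (υ * Real.exp y)))

lemma hasDerivAt_trm (υ c : ℝ) (n : ℕ) (y : ℝ) :
    HasDerivAt (fun z => trm υ c z n) ((n : ℝ) * trm υ c y n) y := by
  have h1 : HasDerivAt (fun z : ℝ => z * n - c * (n:ℝ)^2) (n : ℝ) y := by
    simpa using ((hasDerivAt_id y).mul_const (n:ℝ)).sub_const (c * (n:ℝ)^2)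
  have h2 := (h1.exp).const_mul (υ ^ n / (Nat.factorial n : ℝ))
  have e : (n : ℝ) * trm υ c y n
      = υ ^ n / (Nat.factorial n : ℝ) * (Real.exp (y * n - c * (n:ℝ)^2) * n) := by
    unfold trm
    ring
  rw [e]
  exact h2

lemma tsum_exp_aux (t : ℝ) : ∑' n : ℕ, t ^ n / (Nat.factorial n : ℝ) = Real.exp t := by
  rw [Real.exp_eq_exp_ℝ, NormedSpace.exp_eq_tsum_div]

lemma summable_pow_mul {t : ℝ} (ht : 0 < t) {k : ℕ} (hk : k ≤ 2) :
    Summable (fun n : ℕ => (n : ℝ) ^ k * (t ^ n / (Nat.factorial n : ℝ))) := by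
  have h := summable_trm (υ := t) ht (c := 0) le_rfl 0 hk
  refine h.congr fun n => ?_
  unfold trm
  simp

lemma tsum_n_mul {t : ℝ} (ht : 0 < t) :
    ∑' n : ℕ, (n : ℝ) * (t ^ n / (Nat.factorial n : ℝ)) = t * Real.exp t := by
  have hs : Summable (fun n : ℕ => (n : ℝ) * (t ^ n / (Nat.factorial n : ℝ))) := by
    simpa using summable_pow_mul ht (k := 1) one_le_two
  rw [hs.tsum_eq_zero_add]
  have hterm : ∀ n : ℕ, ((n:ℕ)+1 : ℝ) * (t ^ (n+1) / (Nat.factorial (n+1) : ℝ))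
      = t * (t ^ n / (Nat.factorial n : ℝ)) := by
    intro n
    rw [Nat.factorial_succ]
    push_cast
    have hn1 : ((n:ℝ) + 1) ≠ 0 := by positivity
    field_simp
    ring
  simp only [Nat.cast_add, Nat.cast_one, Nat.cast_zero]
  rw [tsum_congr (fun n => by exact_mod_cast hterm n)]
  rw [tsum_mul_left, tsum_exp_aux]
  simp

lemma tsum_n_sq_mul {t : ℝ} (ht : 0 < t) :
    ∑' n : ℕ, (n : ℝ) ^ 2 * (t ^ n / (Nat.factorial n : ℝ)) = (t + t ^ 2) * Real.exp t := by
  have hs : Summable (fun n : ℕ => (n : ℝ) ^ 2 * (t ^ n / (Nat.factorial n : ℝ))) :=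
    summable_pow_mul ht le_rfl
  rw [hs.tsum_eq_zero_add]
  have hterm : ∀ n : ℕ, (((n:ℕ)+1 : ℝ)) ^ 2 * (t ^ (n+1) / (Nat.factorial (n+1) : ℝ))
      = t * ((n:ℝ) * (t ^ n / (Nat.factorial n : ℝ))) + t * (t ^ n / (Nat.factorial n : ℝ)) := by
    intro n
    rw [Nat.factorial_succ]
    push_cast
    have hn1 : ((n:ℝ) + 1) ≠ 0 := by positivity
    field_simp
    ring
  simp only [Nat.cast_add, Nat.cast_one, Nat.cast_zero]
  rw [tsum_congr (fun n => by exact_mod_cast hterm n)]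
  have hs1 : Summable (fun n : ℕ => t * ((n:ℝ) * (t ^ n / (Nat.factorial n : ℝ)))) := by
    apply Summable.mul_left
    simpa using summable_pow_mul ht (k := 1) one_le_two
  have hs0 : Summable (fun n : ℕ => t * (t ^ n / (Nat.factorial n : ℝ))) :=
    (Real.summable_pow_div_factorial t).mul_left t
  rw [hs1.tsum_add hs0, tsum_mul_left, tsum_mul_left, tsum_n_mul ht, tsum_exp_aux]
  ring_nf

lemma trm_zero (υ x : ℝ) (n : ℕ) :
    trm υ 0 x n = (υ * Real.exp x) ^ n / (Nat.factorial n : ℝ) := by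
  unfold trm
  rw [mul_pow, ← Real.exp_nat_mul, zero_mul, sub_zero, mul_comm (n:ℝ) x]
  ring

lemma phi_deriv_eq {υ a p : ℝ} (hυ : 0 < υ) (hc : 0 ≤ a * p / 2) (x : ℝ) :
    deriv (fun x' => phi υ a x' p) x
      = (∑' n : ℕ, (n:ℝ) * trm υ (a*p/2) x n) / (∑' n : ℕ, trm υ (a*p/2) x n)
    ∧ deriv (deriv (fun x' => phi υ a x' p)) x
      = ((∑' n : ℕ, (n:ℝ)^2 * trm υ (a*p/2) x n) * (∑' n : ℕ, trm υ (a*p/2) x n)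
         - (∑' n : ℕ, (n:ℝ) * trm υ (a*p/2) x n) * (∑' n : ℕ, (n:ℝ) * trm υ (a*p/2) x n))
        / (∑' n : ℕ, trm υ (a*p/2) x n) ^ 2 := by
  set c := a * p / 2 with hcdef
  set s : Set ℝ := Set.Ioo (x-1) (x+1) with hsdef
  have hx : x ∈ s := Set.mem_Ioo.mpr ⟨by linarith, by linarith⟩
  have hu : Summable (fun n : ℕ => (4 * (υ * Real.exp (x+1))) ^ n / (Nat.factorial n : ℝ)) :=
    Real.summable_pow_div_factorial _
  have hpos : ∀ y : ℝ, 0 < ∑' n : ℕ, trm υ c y n := by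
    intro y
    refine Summable.tsum_pos ?_ (fun n => (trm_pos hυ c y n).le) 0 (trm_pos hυ c y 0)
    simpa using summable_trm hυ hc y (k := 0) (by norm_num)
  have hd0 : ∀ y ∈ s, HasDerivAt (fun z => ∑' n : ℕ, trm υ c z n)
      (∑' n : ℕ, (n:ℝ) * trm υ c y n) y := by
    intro y hy
    refine hasDerivAt_tsum_of_isPreconnected hu isOpen_Ioo isPreconnected_Ioo
      (fun n z _ => hasDerivAt_trm υ c n z) (fun n z hz => ?_) hx ?_ hy
    · rw [Real.norm_eq_abs, abs_of_nonneg (mul_nonneg (Nat.cast_nonneg n) (trm_pos hυ c z n).le)]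
      simpa [pow_one] using trm_bound hυ hc hz.2.le (k := 1) one_le_two n
    · simpa using summable_trm hυ hc x (k := 0) (by norm_num)
  have hd1 : ∀ y ∈ s, HasDerivAt (fun z => ∑' n : ℕ, (n:ℝ) * trm υ c z n)
      (∑' n : ℕ, (n:ℝ)^2 * trm υ c y n) y := by
    intro y hy
    refine hasDerivAt_tsum_of_isPreconnected hu isOpen_Ioo isPreconnected_Ioo
      (g := fun (n : ℕ) (z : ℝ) => (n:ℝ) * trm υ c z n) (g' := fun (n : ℕ) (z : ℝ) => (n:ℝ)^2 * trm υ c z n)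
      (fun n z _ => ?_) (fun n z hz => ?_) hx ?_ hy
    · simpa [pow_two, mul_assoc] using (hasDerivAt_trm υ c n z).const_mul (n:ℝ)
    · rw [Real.norm_eq_abs, abs_of_nonneg (mul_nonneg (by positivity) (trm_pos hυ c z n).le)]
      exact trm_bound hυ hc hz.2.le (k := 2) le_rfl n
    · simpa [pow_one] using summable_trm hυ hc x (k := 1) one_le_two
  have hlog : ∀ y ∈ s, HasDerivAt (fun x' => phi υ a x' p)
      ((∑' n : ℕ, (n:ℝ) * trm υ c y n) / (∑' n : ℕ, trm υ c y n)) y := by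
    intro y hy
    have h := (hd0 y hy).log (hpos y).ne'
    exact h
  constructor
  · exact (hlog x hx).deriv
  · have heq : deriv (fun x' => phi υ a x' p)
        =ᶠ[nhds x] fun y => (∑' n : ℕ, (n:ℝ) * trm υ c y n) / (∑' n : ℕ, trm υ c y n) := by
      filter_upwards [isOpen_Ioo.mem_nhds hx] with y hy using (hlog y hy).deriv
    have hratio := (hd1 x hx).div (hd0 x hx) (hpos x).ne'
    rw [heq.deriv_eq]
    exact hratio.deriv

theorem stmt_14 (υ a : ℝ) (hυ : 0 < υ) (ha : 1 < a) (x : ℝ) :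
    Filter.Tendsto (fun p : ℝ => phi υ a x p)
      (nhdsWithin 0 (Set.Ioi 0)) (nhds (υ * Real.exp x)) ∧
    Filter.Tendsto (fun p : ℝ => deriv (fun x' => phi υ a x' p) x)
      (nhdsWithin 0 (Set.Ioi 0)) (nhds (υ * Real.exp x)) ∧
    Filter.Tendsto (fun p : ℝ => deriv (deriv (fun x' => phi υ a x' p)) x)
      (nhdsWithin 0 (Set.Ioi 0)) (nhds (υ * Real.exp x)) := by
  have htpos : 0 < υ * Real.exp x := by positivity
  set t := υ * Real.exp x with htdef
  have hEne : Real.exp t ≠ 0 := Real.exp_ne_zero t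
  have hcnn : ∀ p ∈ Set.Ioi (0:ℝ), 0 ≤ a * p / 2 := by
    intro p hp
    have : (0:ℝ) < p := hp
    nlinarith
  -- key convergence of the three sums
  have key : ∀ k : ℕ, k ≤ 2 → Filter.Tendsto
      (fun p : ℝ => ∑' n : ℕ, (n:ℝ)^k * trm υ (a*p/2) x n)
      (nhdsWithin 0 (Set.Ioi 0))
      (nhds (∑' n : ℕ, (n:ℝ)^k * (t ^ n / (Nat.factorial n : ℝ)))) := by
    intro k hk
    apply tendsto_tsum_of_dominated_convergence
      (bound := fun n : ℕ => (4 * (υ * Real.exp x)) ^ n / (Nat.factorial n : ℝ))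
      (Real.summable_pow_div_factorial _)
    · intro n
      have hcont : Continuous fun p : ℝ => (n:ℝ)^k * trm υ (a*p/2) x n := by
        unfold trm
        fun_prop
      have h0 : Filter.Tendsto (fun p : ℝ => (n:ℝ)^k * trm υ (a*p/2) x n)
          (nhdsWithin 0 (Set.Ioi 0)) (nhds ((n:ℝ)^k * trm υ (a*0/2) x n)) :=
        (hcont.tendsto 0).mono_left nhdsWithin_le_nhds
      simpa [trm_zero, htdef] using h0
    · filter_upwards [self_mem_nhdsWithin] with p hp
      intro n
      rw [Real.norm_eq_abs,
        abs_of_nonneg (mul_nonneg (by positivity) (trm_pos hυ (a*p/2) x n).le)]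
      exact trm_bound hυ (hcnn p hp) le_rfl hk n
  have hT0 : Filter.Tendsto (fun p : ℝ => ∑' n : ℕ, trm υ (a*p/2) x n)
      (nhdsWithin 0 (Set.Ioi 0)) (nhds (Real.exp t)) := by
    have := key 0 (by norm_num)
    simpa [tsum_exp_aux t] using this
  have hT1 : Filter.Tendsto (fun p : ℝ => ∑' n : ℕ, (n:ℝ) * trm υ (a*p/2) x n)
      (nhdsWithin 0 (Set.Ioi 0)) (nhds (t * Real.exp t)) := by
    have := key 1 one_le_two
    simpa [pow_one, tsum_n_mul htpos] using this
  have hT2 : Filter.Tendsto (fun p : ℝ => ∑' n : ℕ, (n:ℝ)^2 * trm υ (a*p/2) x n)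
      (nhdsWithin 0 (Set.Ioi 0)) (nhds ((t + t^2) * Real.exp t)) := by
    have := key 2 le_rfl
    simpa [tsum_n_sq_mul htpos] using this
  refine ⟨?_, ?_, ?_⟩
  · have : (fun p : ℝ => phi υ a x p)
        = fun p : ℝ => Real.log (∑' n : ℕ, trm υ (a*p/2) x n) := rfl
    rw [this]
    have h := hT0.log hEne
    simpa [Real.log_exp] using h
  · have h := hT1.div hT0 hEne
    have hval : t * Real.exp t / Real.exp t = t := by field_simp
    rw [hval] at h
    apply h.congr'
    filter_upwards [self_mem_nhdsWithin] with p hp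
    exact ((phi_deriv_eq hυ (hcnn p hp) x).1).symm
  · have hval : ((t + t^2) * Real.exp t * Real.exp t - t * Real.exp t * (t * Real.exp t))
        / (Real.exp t * Real.exp t) = t := by field_simp; ring
    have h' := ((hT2.mul hT0).sub (hT1.mul hT1)).div (hT0.mul hT0) (by positivity)
    rw [hval] at h'
    have h : Filter.Tendsto (fun p : ℝ =>
        ((∑' n : ℕ, (n:ℝ)^2 * trm υ (a*p/2) x n) * (∑' n : ℕ, trm υ (a*p/2) x n)
          - (∑' n : ℕ, (n:ℝ) * trm υ (a*p/2) x n) * (∑' n : ℕ, (n:ℝ) * trm υ (a*p/2) x n))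
        / (∑' n : ℕ, trm υ (a*p/2) x n) ^ 2) (nhdsWithin 0 (Set.Ioi 0)) (nhds t) := by
      apply h'.congr
      intro p
      simp only [Pi.div_apply, sq]
    apply h.congr'
    filter_upwards [self_mem_nhdsWithin] with p hp
    exact ((phi_deriv_eq hυ (hcnn p hp) x).2).symm
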